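/- Uniqueness for the homogeneous discrete problem: if (v_h, σ_h) is an elementwise-polynomial field on the space–time mesh whose DG seminorm vanishes, |(v_h,σ_h)|_DG = 0, and which satisfies ∇v_h + ∂ₜσ_h = 0 and ∇·σ_h + c^{-2}∂ₜv_h = 0 in each space–time element, then (v_h, σ_h) ≡ 0 in Q = Ω × (0,T). -/

import Mathlib

open Filter Topology

section DGUniqAux
open MvPolynomial

noncomputable section

private def bigL (P : MvPolynomial (Fin 3) ℝ) (x : Fin 3 → ℝ) : (Fin 3 → ℝ) →L[ℝ] ℝ :=
  ∑ i : Fin 3, eval x (pderiv i P) • (ContinuousLinearMap.proj i : (Fin 3 → ℝ) →L[ℝ] ℝ)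

private lemma bigL_apply (P : MvPolynomial (Fin 3) ℝ) (x v : Fin 3 → ℝ) :
    bigL P x v = ∑ i : Fin 3, eval x (pderiv i P) * v i := by
  simp [bigL]

private lemma hasFDerivAt_eval (P : MvPolynomial (Fin 3) ℝ) (x : Fin 3 → ℝ) :
    HasFDerivAt (fun y => eval y P) (bigL P x) x := by
  induction P using MvPolynomial.induction_on with
  | C c =>
      simpa [bigL, pderiv_C] using hasFDerivAt_const (eval x (C c : MvPolynomial (Fin 3) ℝ)) x
  | add p q hp hq =>
      have := hp.add hq
      convert this using 1
      · rfl
      · rfl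
      · rfl
      · rfl
      · rfl
      · ext y; simp
      · simp [bigL, map_add, add_smul, Finset.sum_add_distrib]
  | mul_X p k hp =>
      have hk : HasFDerivAt (fun y : Fin 3 → ℝ => y k)
          (ContinuousLinearMap.proj k : (Fin 3 → ℝ) →L[ℝ] ℝ) x :=
        hasFDerivAt_apply k x
      have H := hp.mul hk
      convert H using 1
      · rfl
      · rfl
      · rfl
      · rfl
      · rfl
      · ext y; simp
      · ext w
        simp only [bigL, ContinuousLinearMap.sum_apply, ContinuousLinearMap.smul_apply,
          ContinuousLinearMap.add_apply, ContinuousLinearMap.proj_apply, smul_eq_mul,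
          pderiv_mul, map_add, map_mul, eval_X]
        simp only [add_mul, Finset.sum_add_distrib, Finset.mul_sum]
        rw [add_comm]
        congr 1
        · classical
          rw [Finset.sum_eq_single k]
          · simp [pderiv_X_self]
          · intro b _ hbk; simp [Pi.single_eq_of_ne (Ne.symm hbk)]
          · simp
        · exact Finset.sum_congr rfl fun i _ => by ring

private lemma eval_zero_of_open {P : MvPolynomial (Fin 3) ℝ} {S : Set (Fin 3 → ℝ)}
    (hS : IsOpen S) (hne : S.Nonempty) (h : ∀ y ∈ S, eval y P = 0) : P = 0 := by
  obtain ⟨z, hz⟩ := hne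
  have han : AnalyticOnNhd ℝ (fun y => eval y P) Set.univ :=
    AnalyticOnNhd.eval_mvPolynomial P
  have hev : (fun y => eval y P) =ᶠ[nhds z] 0 := by
    filter_upwards [hS.mem_nhds hz] with y hy using h y hy
  have := han.eqOn_zero_of_preconnected_of_eventuallyEq_zero isPreconnected_univ
    (Set.mem_univ z) hev
  apply MvPolynomial.funext
  intro y
  simpa using this (Set.mem_univ y)

private lemma hasDerivAt_time (P : MvPolynomial (Fin 3) ℝ) (x0 x1 r : ℝ) :
    HasDerivAt (fun s => eval ![x0, x1, s] P) (eval ![x0, x1, r] (pderiv 2 P)) r := by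
  have hc : HasDerivAt (fun s : ℝ => (![x0, x1, s] : Fin 3 → ℝ)) ![0, 0, 1] r := by
    rw [hasDerivAt_pi]
    intro i
    fin_cases i
    · simpa using hasDerivAt_const r x0
    · simpa using hasDerivAt_const r x1
    · simpa using hasDerivAt_id' r
  have := (hasFDerivAt_eval P ![x0, x1, r]).comp_hasDerivAt r hc
  refine this.congr_deriv ?_
  rw [bigL_apply, Fin.sum_univ_three]
  simp

private lemma continuous_time (P : MvPolynomial (Fin 3) ℝ) (x0 x1 : ℝ) :
    Continuous (fun s => eval ![x0, x1, s] P) :=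
  continuous_iff_continuousAt.2 fun r => (hasDerivAt_time P x0 x1 r).continuousAt

private lemma space_deriv (P : MvPolynomial (Fin 3) ℝ) (s : ℝ) (x : Fin 2 → ℝ) :
    ∃ L : (Fin 2 → ℝ) →L[ℝ] ℝ,
      HasFDerivAt (fun y : Fin 2 → ℝ => eval ![y 0, y 1, s] P) L x ∧
      ∀ k : Fin 2, L (Pi.single k 1) = eval ![x 0, x 1, s] (pderiv (Fin.castSucc k) P) := by
  set M : (Fin 2 → ℝ) →L[ℝ] (Fin 3 → ℝ) :=
    ContinuousLinearMap.pi ![ContinuousLinearMap.proj 0, ContinuousLinearMap.proj 1, 0] with hM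
  have hMapp : ∀ y : Fin 2 → ℝ, M y = ![y 0, y 1, 0] := by
    intro y; funext i; fin_cases i <;> simp [hM]
  have hm : HasFDerivAt (fun y : Fin 2 → ℝ => (![y 0, y 1, s] : Fin 3 → ℝ)) M x := by
    have : (fun y : Fin 2 → ℝ => (![y 0, y 1, s] : Fin 3 → ℝ))
        = fun y => M y + ![0, 0, s] := by
      funext y i; rw [hMapp]; fin_cases i <;> simp
    rw [this]
    exact M.hasFDerivAt.add_const _
  refine ⟨(bigL P ![x 0, x 1, s]).comp M, (hasFDerivAt_eval P _).comp x hm, ?_⟩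
  intro k
  rw [ContinuousLinearMap.comp_apply, hMapp, bigL_apply, Fin.sum_univ_three]
  fin_cases k <;> simp [Fin.castSucc]

private lemma pderiv_comm' (i j : Fin 3) (P : MvPolynomial (Fin 3) ℝ) :
    pderiv i (pderiv j P) = pderiv j (pderiv i P) := by
  rcases eq_or_ne i j with rfl | hij
  · rfl
  induction P using MvPolynomial.induction_on' with
  | add p q hp hq => simp [map_add, hp, hq]
  | monomial m c =>
      classical
      rw [pderiv_monomial, pderiv_monomial, pderiv_monomial, pderiv_monomial]
      have h1 : ((m - Finsupp.single j 1 : Fin 3 →₀ ℕ)) i = m i := by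
        simp [Finsupp.tsub_apply, Finsupp.single_apply, hij.symm]
      have h2 : ((m - Finsupp.single i 1 : Fin 3 →₀ ℕ)) j = m j := by
        simp [Finsupp.tsub_apply, Finsupp.single_apply, hij]
      rw [h1, h2, tsub_tsub, tsub_tsub, add_comm (Finsupp.single j 1)]
      ring_nf

private lemma pderiv_as_sum (P : MvPolynomial (Fin 3) ℝ) :
    pderiv 2 P = ∑ m' ∈ P.support,
      monomial (m' - Finsupp.single 2 1) (coeff m' P * (m' 2 : ℝ)) := by
  conv_lhs => rw [P.as_sum]
  rw [map_sum]
  refine Finset.sum_congr rfl fun m' _ => ?_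
  rw [pderiv_monomial]

private lemma degree_drop {P : MvPolynomial (Fin 3) ℝ} {n : ℕ} (h : degreeOf 2 P ≤ n + 1) :
    degreeOf 2 (pderiv 2 P) ≤ n := by
  classical
  rw [degreeOf_le_iff]
  intro m hm
  rw [pderiv_as_sum] at hm
  obtain ⟨m', hm', hmem⟩ := Finset.mem_biUnion.1 (support_sum hm)
  have hsub := support_monomial_subset hmem
  rw [Finset.mem_singleton] at hsub
  have hne : coeff m' P * (m' 2 : ℝ) ≠ 0 := by
    intro h0
    rw [mem_support_iff] at hmem
    simp [h0] at hmem
  have h2 : m' 2 ≠ 0 := by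
    intro h0; exact hne (by simp [h0])
  have hle : m' 2 ≤ n + 1 := degreeOf_le_iff.1 h m' hm'
  subst hsub
  have : (m' - Finsupp.single 2 1 : Fin 3 →₀ ℕ) 2 = m' 2 - 1 := by
    simp [Finsupp.tsub_apply]
  rw [this]
  omega

private lemma pderiv2_zero_of_deg0 {P : MvPolynomial (Fin 3) ℝ} (h : degreeOf 2 P ≤ 0) :
    pderiv 2 P = 0 := by
  apply pderiv_eq_zero_of_notMem_vars
  intro hv
  obtain ⟨m, hm, h2⟩ := (mem_vars 2).1 hv
  have := degreeOf_le_iff.1 h m hm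
  rw [Finsupp.mem_support_iff] at h2
  omega

/-- the trace predicate: vanishing at time `a` on `U` -/
private def Ztr (U : Set (Fin 2 → ℝ)) (a : ℝ) (R : MvPolynomial (Fin 3) ℝ) : Prop :=
  ∀ x ∈ U, eval ![x 0, x 1, a] R = 0

private lemma Ztr_pderiv_space {U : Set (Fin 2 → ℝ)} (hUo : IsOpen U) {a : ℝ}
    {R : MvPolynomial (Fin 3) ℝ} (hZ : Ztr U a R) (k : Fin 2) :
    Ztr U a (pderiv (Fin.castSucc k) R) := by
  intro x hx
  obtain ⟨L, hL, hLk⟩ := space_deriv R a x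
  have hev : (fun y : Fin 2 → ℝ => eval ![y 0, y 1, a] R) =ᶠ[nhds x] (fun _ => 0) := by
    filter_upwards [hUo.mem_nhds hx] with y hy using hZ y hy
  have h0 : HasFDerivAt (fun y : Fin 2 → ℝ => eval ![y 0, y 1, a] R)
      (0 : (Fin 2 → ℝ) →L[ℝ] ℝ) x :=
    (hasFDerivAt_const (0 : ℝ) x).congr_of_eventuallyEq hev
  have hL0 : L = 0 := hL.unique h0
  have := hLk k
  rw [hL0] at this
  simpa using this.symm

private lemma zero_from_pderiv2 {U : Set (Fin 2 → ℝ)} (hUo : IsOpen U) (hUne : U.Nonempty)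
    {a : ℝ} {R : MvPolynomial (Fin 3) ℝ} (h2 : pderiv 2 R = 0) (hZ : Ztr U a R) :
    R = 0 := by
  have hconst : ∀ x : Fin 2 → ℝ, ∀ s : ℝ, eval ![x 0, x 1, s] R = eval ![x 0, x 1, a] R := by
    intro x s
    have hd : ∀ r : ℝ, HasDerivAt (fun s => eval ![x 0, x 1, s] R) 0 r := by
      intro r
      have := hasDerivAt_time R (x 0) (x 1) r
      rwa [h2, map_zero] at this
    exact is_const_of_deriv_eq_zero (fun r => (hd r).differentiableAt)
      (fun r => (hd r).deriv) s a
  set S : Set (Fin 3 → ℝ) := (fun y : Fin 3 → ℝ => (![y 0, y 1] : Fin 2 → ℝ)) ⁻¹' U with hS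
  have hcont : Continuous (fun y : Fin 3 → ℝ => (![y 0, y 1] : Fin 2 → ℝ)) := by
    apply continuous_pi
    intro i
    fin_cases i
    · simpa using continuous_apply (0 : Fin 3)
    · simpa using continuous_apply (1 : Fin 3)
  have hSo : IsOpen S := hcont.isOpen_preimage U hUo
  have hSne : S.Nonempty := by
    obtain ⟨x, hx⟩ := hUne
    refine ⟨![x 0, x 1, 0], ?_⟩
    simp only [hS, Set.mem_preimage]
    have : (![(![x 0, x 1, 0] : Fin 3 → ℝ) 0, (![x 0, x 1, 0] : Fin 3 → ℝ) 1] : Fin 2 → ℝ)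
        = x := by
      funext i; fin_cases i <;> simp
    rw [this]; exact hx
  refine eval_zero_of_open hSo hSne ?_
  intro y hy
  have hy' : (![y 0, y 1] : Fin 2 → ℝ) ∈ U := hy
  have := hconst ![y 0, y 1] (y 2)
  have heta : (![(![y 0, y 1] : Fin 2 → ℝ) 0, (![y 0, y 1] : Fin 2 → ℝ) 1, y 2]
      : Fin 3 → ℝ) = y := by
    funext i; fin_cases i <;> simp
  rw [heta] at this
  rw [this]
  exact hZ _ hy'

private lemma alg {U : Set (Fin 2 → ℝ)} (hUo : IsOpen U) (hUne : U.Nonempty) {a : ℝ}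
    (γ : ℝ) (hγ : γ ≠ 0) :
    ∀ n : ℕ, ∀ R S0 S1 : MvPolynomial (Fin 3) ℝ,
    degreeOf 2 R ≤ n → degreeOf 2 S0 ≤ n → degreeOf 2 S1 ≤ n →
    pderiv 0 R + pderiv 2 S0 = 0 →
    pderiv 1 R + pderiv 2 S1 = 0 →
    pderiv 0 S0 + pderiv 1 S1 + C γ * pderiv 2 R = 0 →
    Ztr U a R → Ztr U a S0 → Ztr U a S1 → R = 0 ∧ S0 = 0 ∧ S1 = 0 := by
  intro n
  induction n with
  | zero =>
      intro R S0 S1 hdR hdS0 hdS1 _ _ _ hZR hZS0 hZS1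
      exact ⟨zero_from_pderiv2 hUo hUne (pderiv2_zero_of_deg0 hdR) hZR,
        zero_from_pderiv2 hUo hUne (pderiv2_zero_of_deg0 hdS0) hZS0,
        zero_from_pderiv2 hUo hUne (pderiv2_zero_of_deg0 hdS1) hZS1⟩
  | succ n ih =>
      intro R S0 S1 hdR hdS0 hdS1 hE1 hE2 hE3 hZR hZS0 hZS1
      have hZ0R : Ztr U a (pderiv 0 R) := by
        have := Ztr_pderiv_space hUo hZR 0; simpa using this
      have hZ1R : Ztr U a (pderiv 1 R) := by
        have := Ztr_pderiv_space hUo hZR 1; simpa using this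
      have hZ0S0 : Ztr U a (pderiv 0 S0) := by
        have := Ztr_pderiv_space hUo hZS0 0; simpa using this
      have hZ1S1 : Ztr U a (pderiv 1 S1) := by
        have := Ztr_pderiv_space hUo hZS1 1; simpa using this
      have hZR' : Ztr U a (pderiv 2 R) := by
        intro x hx
        have h3 := congrArg (eval ![x 0, x 1, a]) hE3
        simp only [map_add, map_mul, eval_C, map_zero] at h3
        rw [hZ0S0 x hx, hZ1S1 x hx] at h3
        have : γ * eval ![x 0, x 1, a] (pderiv 2 R) = 0 := by linarith
        exact (mul_eq_zero.1 this).resolve_left hγ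
      have hZS0' : Ztr U a (pderiv 2 S0) := by
        intro x hx
        have h1 := congrArg (eval ![x 0, x 1, a]) hE1
        simp only [map_add, map_zero] at h1
        rw [hZ0R x hx] at h1
        linarith
      have hZS1' : Ztr U a (pderiv 2 S1) := by
        intro x hx
        have h1 := congrArg (eval ![x 0, x 1, a]) hE2
        simp only [map_add, map_zero] at h1
        rw [hZ1R x hx] at h1
        linarith
      have hE1' : pderiv 0 (pderiv 2 R) + pderiv 2 (pderiv 2 S0) = 0 := by
        have := congrArg (pderiv 2) hE1
        rwa [map_add, map_zero, pderiv_comm' 2 0] at this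
      have hE2' : pderiv 1 (pderiv 2 R) + pderiv 2 (pderiv 2 S1) = 0 := by
        have := congrArg (pderiv 2) hE2
        rwa [map_add, map_zero, pderiv_comm' 2 1] at this
      have hE3' : pderiv 0 (pderiv 2 S0) + pderiv 1 (pderiv 2 S1)
          + C γ * pderiv 2 (pderiv 2 R) = 0 := by
        have := congrArg (pderiv 2) hE3
        rwa [map_add, map_add, map_zero, pderiv_comm' 2 0, pderiv_comm' 2 1,
          pderiv_C_mul] at this
      obtain ⟨hR', hS0', hS1'⟩ := ih (pderiv 2 R) (pderiv 2 S0) (pderiv 2 S1)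
        (degree_drop hdR) (degree_drop hdS0) (degree_drop hdS1)
        hE1' hE2' hE3' hZR' hZS0' hZS1'
      exact ⟨zero_from_pderiv2 hUo hUne hR' hZR,
        zero_from_pderiv2 hUo hUne hS0' hZS0,
        zero_from_pderiv2 hUo hUne hS1' hZS1⟩

private lemma slab (v : (Fin 2 → ℝ) → ℝ → ℝ) (σ : (Fin 2 → ℝ) → ℝ → Fin 2 → ℝ)
    {K U : Set (Fin 2 → ℝ)} (hKo : IsOpen K) (hUo : IsOpen U) (hUne : U.Nonempty)
    (hUK : U ⊆ K) {a b : ℝ} (hab : a < b) {cc : ℝ} (hcc : 0 < cc)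
    (P : MvPolynomial (Fin 3) ℝ) (Q : Fin 2 → MvPolynomial (Fin 3) ℝ)
    (hrep : ∀ x ∈ K, ∀ s ∈ Set.Ioo a b, v x s = eval ![x 0, x 1, s] P ∧
      ∀ k : Fin 2, σ x s k = eval ![x 0, x 1, s] (Q k))
    (hP1 : ∀ x ∈ K, ∀ s ∈ Set.Ioo a b, ∀ k : Fin 2,
      fderiv ℝ (fun y => v y s) x (Pi.single k 1) + deriv (fun r => σ x r k) s = 0)
    (hP2 : ∀ x ∈ K, ∀ s ∈ Set.Ioo a b,
      (∑ k : Fin 2, fderiv ℝ (fun y => σ y s k) x (Pi.single k 1))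
        + ((cc : ℝ) ^ 2)⁻¹ * deriv (fun r => v x r) s = 0)
    (htrv : ∀ x ∈ U, Tendsto (fun s => v x s) (nhdsWithin a (Set.Ioi a)) (nhds 0))
    (htrσ : ∀ x ∈ U, ∀ k : Fin 2,
      Tendsto (fun s => σ x s k) (nhdsWithin a (Set.Ioi a)) (nhds 0)) :
    P = 0 ∧ ∀ k : Fin 2, Q k = 0 := by
  have hIoo : Set.Ioo a b ∈ nhdsWithin a (Set.Ioi a) := Ioo_mem_nhdsGT hab
  have hZP : Ztr U a P := by
    intro x hx
    have heq : (fun s => v x s) =ᶠ[nhdsWithin a (Set.Ioi a)]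
        (fun s => eval ![x 0, x 1, s] P) := by
      filter_upwards [hIoo] with s hs using (hrep x (hUK hx) s hs).1
    have h1 : Tendsto (fun s => eval ![x 0, x 1, s] P)
        (nhdsWithin a (Set.Ioi a)) (nhds 0) := (htrv x hx).congr' heq
    have h2 : Tendsto (fun s => eval ![x 0, x 1, s] P)
        (nhdsWithin a (Set.Ioi a)) (nhds (eval ![x 0, x 1, a] P)) :=
      ((continuous_time P (x 0) (x 1)).tendsto a).mono_left nhdsWithin_le_nhds
    exact tendsto_nhds_unique h2 h1
  have hZQ : ∀ k : Fin 2, Ztr U a (Q k) := by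
    intro k x hx
    have heq : (fun s => σ x s k) =ᶠ[nhdsWithin a (Set.Ioi a)]
        (fun s => eval ![x 0, x 1, s] (Q k)) := by
      filter_upwards [hIoo] with s hs using (hrep x (hUK hx) s hs).2 k
    have h1 : Tendsto (fun s => eval ![x 0, x 1, s] (Q k))
        (nhdsWithin a (Set.Ioi a)) (nhds 0) := (htrσ x hx k).congr' heq
    have h2 : Tendsto (fun s => eval ![x 0, x 1, s] (Q k))
        (nhdsWithin a (Set.Ioi a)) (nhds (eval ![x 0, x 1, a] (Q k))) :=
      ((continuous_time (Q k) (x 0) (x 1)).tendsto a).mono_left nhdsWithin_le_nhds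
    exact tendsto_nhds_unique h2 h1
  have hfd : ∀ (R : MvPolynomial (Fin 3) ℝ) (g : (Fin 2 → ℝ) → ℝ → ℝ),
      (∀ x ∈ K, ∀ s ∈ Set.Ioo a b, g x s = eval ![x 0, x 1, s] R) →
      ∀ x ∈ K, ∀ s ∈ Set.Ioo a b, ∀ k : Fin 2,
      fderiv ℝ (fun y => g y s) x (Pi.single k 1)
        = eval ![x 0, x 1, s] (pderiv (Fin.castSucc k) R) := by
    intro R g hg x hx s hs k
    obtain ⟨L, hL, hLk⟩ := space_deriv R s x
    have heq : (fun y => g y s) =ᶠ[nhds x] (fun y => eval ![y 0, y 1, s] R) := by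
      filter_upwards [hKo.mem_nhds hx] with y hy using hg y hy s hs
    rw [heq.fderiv_eq, hL.fderiv]
    exact hLk k
  have htd : ∀ (R : MvPolynomial (Fin 3) ℝ) (g : ℝ → ℝ) (x : Fin 2 → ℝ),
      (∀ s ∈ Set.Ioo a b, g s = eval ![x 0, x 1, s] R) →
      ∀ s ∈ Set.Ioo a b,
      deriv g s = eval ![x 0, x 1, s] (pderiv 2 R) := by
    intro R g x hg s hs
    have heq : g =ᶠ[nhds s] (fun r => eval ![x 0, x 1, r] R) := by
      filter_upwards [isOpen_Ioo.mem_nhds hs] with r hr using hg r hr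
    rw [heq.deriv_eq, (hasDerivAt_time R (x 0) (x 1) s).deriv]
  have key1 : ∀ x ∈ K, ∀ s ∈ Set.Ioo a b, ∀ k : Fin 2,
      eval ![x 0, x 1, s] (pderiv (Fin.castSucc k) P + pderiv 2 (Q k)) = 0 := by
    intro x hx s hs k
    have h := hP1 x hx s hs k
    rw [hfd P v (fun x hx s hs => (hrep x hx s hs).1) x hx s hs k,
      htd (Q k) (fun r => σ x r k) x (fun r hr => (hrep x hx r hr).2 k) s hs] at h
    simpa [map_add] using h
  have key2 : ∀ x ∈ K, ∀ s ∈ Set.Ioo a b,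
      eval ![x 0, x 1, s] (pderiv 0 (Q 0) + pderiv 1 (Q 1)
        + C ((cc ^ 2)⁻¹) * pderiv 2 P) = 0 := by
    intro x hx s hs
    have h := hP2 x hx s hs
    rw [Fin.sum_univ_two] at h
    rw [hfd (Q 0) (fun y s => σ y s 0) (fun x hx s hs => (hrep x hx s hs).2 0) x hx s hs 0,
      hfd (Q 1) (fun y s => σ y s 1) (fun x hx s hs => (hrep x hx s hs).2 1) x hx s hs 1,
      htd P (fun r => v x r) x (fun r hr => (hrep x hx r hr).1) s hs] at h
    simpa [map_add, map_mul, Fin.castSucc] using h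
  have hT : ∀ R : MvPolynomial (Fin 3) ℝ,
      (∀ x ∈ K, ∀ s ∈ Set.Ioo a b, eval ![x 0, x 1, s] R = 0) → R = 0 := by
    intro R hR
    set S : Set (Fin 3 → ℝ) :=
      {y | (![y 0, y 1] : Fin 2 → ℝ) ∈ K ∧ y 2 ∈ Set.Ioo a b} with hSdef
    have hcont : Continuous (fun y : Fin 3 → ℝ => (![y 0, y 1] : Fin 2 → ℝ)) := by
      apply continuous_pi
      intro i
      fin_cases i
      · simpa using continuous_apply (0 : Fin 3)
      · simpa using continuous_apply (1 : Fin 3)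
    have hSo : IsOpen S := by
      apply IsOpen.inter
      · exact hcont.isOpen_preimage K hKo
      · exact (continuous_apply (2 : Fin 3)).isOpen_preimage _ isOpen_Ioo
    have hSne : S.Nonempty := by
      obtain ⟨x, hx⟩ := hUne
      refine ⟨![x 0, x 1, (a + b) / 2], ?_, ?_⟩
      · have : (![(![x 0, x 1, (a + b)/2] : Fin 3 → ℝ) 0,
            (![x 0, x 1, (a + b)/2] : Fin 3 → ℝ) 1] : Fin 2 → ℝ) = x := by
          funext i; fin_cases i <;> simp
        rw [this]; exact hUK hx
      · constructor <;> [skip; skip] <;> simp <;> linarith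
    refine eval_zero_of_open hSo hSne ?_
    intro y hy
    have h := hR ![y 0, y 1] hy.1 (y 2) hy.2
    have heta : (![(![y 0, y 1] : Fin 2 → ℝ) 0, (![y 0, y 1] : Fin 2 → ℝ) 1, y 2]
        : Fin 3 → ℝ) = y := by
      funext i; fin_cases i <;> simp
    rwa [heta] at h
  have hA0 : pderiv 0 P + pderiv 2 (Q 0) = 0 := by
    have := hT _ (fun x hx s hs => key1 x hx s hs 0)
    simpa [Fin.castSucc] using this
  have hA1 : pderiv 1 P + pderiv 2 (Q 1) = 0 := by
    have := hT _ (fun x hx s hs => key1 x hx s hs 1)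
    simpa [Fin.castSucc] using this
  have hB : pderiv 0 (Q 0) + pderiv 1 (Q 1) + C ((cc ^ 2)⁻¹) * pderiv 2 P = 0 :=
    hT _ key2
  have hγ : ((cc : ℝ) ^ 2)⁻¹ ≠ 0 := by positivity
  obtain ⟨h1, h2, h3⟩ := alg hUo hUne ((cc ^ 2)⁻¹) hγ
    (max (degreeOf 2 P) (max (degreeOf 2 (Q 0)) (degreeOf 2 (Q 1)))) P (Q 0) (Q 1)
    (le_max_left _ _) (le_trans (le_max_left _ _) (le_max_right _ _))
    (le_trans (le_max_right _ _) (le_max_right _ _))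
    hA0 hA1 hB hZP (hZQ 0) (hZQ 1)
  refine ⟨h1, fun k => ?_⟩
  fin_cases k
  · exact h2
  · exact h3

end
end DGUniqAux

/-- Uniqueness for the homogeneous discrete problem: an elementwise-polynomial field
`(v_h, σ_h)` on a prismatic space–time mesh of `Q = Ω × (0,T)` whose DG seminorm vanishes
(all time-jumps across interior space-like interfaces vanish, spatial jumps of `v_h` vanish,
the Dirichlet trace of `v_h` vanishes on `Γ_D`, and the initial traces vanish) and which
solves the first-order wave system `∇v_h + ∂ₜσ_h = 0`, `∇·σ_h + c⁻²∂ₜv_h = 0` in each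
element, is identically zero in `Q`.

The mesh is encoded by strictly increasing time nodes `t 0 = 0 < t 1 < … < t N = T`
and, for each time slab `n`, a finite family `Kx n i` of pairwise disjoint open spatial
elements contained in `Ω` whose union is dense in `Ω`; the wave speed `c n i > 0` is
constant on each element; elementwise-polynomial means that on each space–time element
`Kx n i × (t n, t (n+1))` the fields agree with (multivariate) polynomials. -/
theorem discrete_uniqueness_homogeneous
    (Ω : Set (Fin 2 → ℝ)) (hΩ : IsOpen Ω)
    (N : ℕ) (hN : 0 < N) (t : ℕ → ℝ) (ht0 : t 0 = 0)
    (htmono : ∀ n < N, t n < t (n + 1))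
    (ι : Type) [Fintype ι]
    (Kx : ℕ → ι → Set (Fin 2 → ℝ))
    (hKopen : ∀ n i, IsOpen (Kx n i))
    (hKsub : ∀ n i, Kx n i ⊆ Ω)
    (hKdisj : ∀ n, ∀ i j, i ≠ j → Disjoint (Kx n i) (Kx n j))
    (hKdense : ∀ n < N, Ω ⊆ closure (⋃ i, Kx n i))
    (c : ℕ → ι → ℝ) (hc : ∀ n i, 0 < c n i)
    (v : (Fin 2 → ℝ) → ℝ → ℝ) (σ : (Fin 2 → ℝ) → ℝ → Fin 2 → ℝ)
    -- elementwise polynomial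
    (hpoly : ∀ n < N, ∀ i : ι, ∃ P : MvPolynomial (Fin 3) ℝ,
      ∃ Q : Fin 2 → MvPolynomial (Fin 3) ℝ,
      ∀ x ∈ Kx n i, ∀ s ∈ Set.Ioo (t n) (t (n + 1)),
        v x s = MvPolynomial.eval ![x 0, x 1, s] P ∧
        ∀ k : Fin 2, σ x s k = MvPolynomial.eval ![x 0, x 1, s] (Q k))
    -- elementwise PDE: ∇v_h + ∂ₜσ_h = 0
    (hPDE1 : ∀ n < N, ∀ i : ι, ∀ x ∈ Kx n i, ∀ s ∈ Set.Ioo (t n) (t (n + 1)), ∀ k : Fin 2,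
      fderiv ℝ (fun y => v y s) x (Pi.single k 1) + deriv (fun r => σ x r k) s = 0)
    -- elementwise PDE: ∇·σ_h + c⁻²∂ₜv_h = 0
    (hPDE2 : ∀ n < N, ∀ i : ι, ∀ x ∈ Kx n i, ∀ s ∈ Set.Ioo (t n) (t (n + 1)),
      (∑ k : Fin 2, fderiv ℝ (fun y => σ y s k) x (Pi.single k 1))
        + ((c n i) ^ 2)⁻¹ * deriv (fun r => v x r) s = 0)
    -- vanishing initial traces (from |(v_h,σ_h)|_DG = 0)
    (hinit : ∀ i : ι, ∀ x ∈ Kx 0 i,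
      Tendsto (fun s => v x s) (nhdsWithin 0 (Set.Ioi 0)) (nhds 0) ∧
      ∀ k : Fin 2, Tendsto (fun s => σ x s k) (nhdsWithin 0 (Set.Ioi 0)) (nhds 0))
    -- vanishing time-jumps across the interior space-like interfaces t (n+1)
    (hjump : ∀ n, n + 1 < N → ∀ i j : ι, ∀ x, x ∈ Kx n i → x ∈ Kx (n + 1) j →
      ((∃ L : ℝ, Tendsto (fun s => v x s) (nhdsWithin (t (n + 1)) (Set.Iio (t (n + 1)))) (nhds L)
          ∧ Tendsto (fun s => v x s) (nhdsWithin (t (n + 1)) (Set.Ioi (t (n + 1)))) (nhds L)) ∧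
       ∀ k : Fin 2, ∃ L : ℝ,
          Tendsto (fun s => σ x s k) (nhdsWithin (t (n + 1)) (Set.Iio (t (n + 1)))) (nhds L)
          ∧ Tendsto (fun s => σ x s k) (nhdsWithin (t (n + 1)) (Set.Ioi (t (n + 1)))) (nhds L)))
    -- vanishing spatial jumps of v_h across time-like interior faces
    (hspace : ∀ n < N, ∀ s ∈ Set.Ioo (t n) (t (n + 1)), ContinuousOn (fun y => v y s) Ω)
    -- vanishing Dirichlet trace of v_h on Γ_D ⊆ ∂Ω
    (ΓD : Set (Fin 2 → ℝ)) (hΓD : ΓD ⊆ frontier Ω)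
    (hDir : ∀ x ∈ ΓD, ∀ n < N, ∀ s ∈ Set.Ioo (t n) (t (n + 1)),
      Tendsto (fun y => v y s) (nhdsWithin x Ω) (nhds 0)) :
    ∀ n < N, ∀ i : ι, ∀ x ∈ Kx n i, ∀ s ∈ Set.Ioo (t n) (t (n + 1)),
      v x s = 0 ∧ σ x s = 0 := by
  have key : ∀ n, n < N → ∀ i : ι, ∀ x ∈ Kx n i, ∀ s ∈ Set.Ioo (t n) (t (n + 1)),
      v x s = 0 ∧ ∀ k : Fin 2, σ x s k = 0 := by
    intro n
    induction n with
    | zero =>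
        intro hn i x hx s hs
        obtain ⟨P, Q, hrep⟩ := hpoly 0 hn i
        have hzero := slab v σ (hKopen 0 i) (hKopen 0 i) ⟨x, hx⟩ subset_rfl
          (htmono 0 hn) (hc 0 i) P Q hrep (hPDE1 0 hn i) (hPDE2 0 hn i)
          (fun y hy => by rw [ht0]; exact (hinit i y hy).1)
          (fun y hy k => by rw [ht0]; exact (hinit i y hy).2 k)
        obtain ⟨hrv, hrσ⟩ := hrep x hx s hs
        refine ⟨?_, fun k => ?_⟩
        · rw [hrv, hzero.1]; simp
        · rw [hrσ k, hzero.2 k]; simp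
    | succ n ih =>
        intro hn1 i x hx s hs
        have hnN : n < N := Nat.lt_of_succ_lt hn1
        have hxΩ : x ∈ Ω := hKsub _ _ hx
        obtain ⟨z, hz⟩ := mem_closure_iff.1 (hKdense n hnN hxΩ) _ (hKopen (n + 1) i) hx
        obtain ⟨j, hzj⟩ := Set.mem_iUnion.1 hz.2
        have hUo : IsOpen (Kx n j ∩ Kx (n + 1) i) := (hKopen n j).inter (hKopen (n + 1) i)
        have hUne : (Kx n j ∩ Kx (n + 1) i).Nonempty := ⟨z, hzj, hz.1⟩
        have hjIoo : Set.Ioo (t n) (t (n + 1)) ∈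
            nhdsWithin (t (n + 1)) (Set.Iio (t (n + 1))) :=
          Ioo_mem_nhdsLT (htmono n hnN)
        have htrv : ∀ y ∈ Kx n j ∩ Kx (n + 1) i,
            Tendsto (fun s => v y s) (nhdsWithin (t (n + 1)) (Set.Ioi (t (n + 1))))
              (nhds 0) := by
          intro y hy
          obtain ⟨⟨L, hLl, hLr⟩, -⟩ := hjump n hn1 j i y hy.1 hy.2
          have heq : (fun s => v y s)
              =ᶠ[nhdsWithin (t (n + 1)) (Set.Iio (t (n + 1)))] (fun _ => 0) := by
            filter_upwards [hjIoo] with r hr using (ih hnN j y hy.1 r hr).1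
          have h0 : Tendsto (fun s => v y s)
              (nhdsWithin (t (n + 1)) (Set.Iio (t (n + 1)))) (nhds 0) :=
            tendsto_const_nhds.congr' heq.symm
          have hL0 : L = 0 := tendsto_nhds_unique hLl h0
          rwa [hL0] at hLr
        have htrσ : ∀ y ∈ Kx n j ∩ Kx (n + 1) i, ∀ k : Fin 2,
            Tendsto (fun s => σ y s k) (nhdsWithin (t (n + 1)) (Set.Ioi (t (n + 1))))
              (nhds 0) := by
          intro y hy k
          obtain ⟨-, hσ⟩ := hjump n hn1 j i y hy.1 hy.2
          obtain ⟨L, hLl, hLr⟩ := hσ k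
          have heq : (fun s => σ y s k)
              =ᶠ[nhdsWithin (t (n + 1)) (Set.Iio (t (n + 1)))] (fun _ => 0) := by
            filter_upwards [hjIoo] with r hr using (ih hnN j y hy.1 r hr).2 k
          have h0 : Tendsto (fun s => σ y s k)
              (nhdsWithin (t (n + 1)) (Set.Iio (t (n + 1)))) (nhds 0) :=
            tendsto_const_nhds.congr' heq.symm
          have hL0 : L = 0 := tendsto_nhds_unique hLl h0
          rwa [hL0] at hLr
        obtain ⟨P, Q, hrep⟩ := hpoly (n + 1) hn1 i
        have hzero := slab v σ (hKopen (n + 1) i) hUo hUne Set.inter_subset_right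
          (htmono (n + 1) hn1) (hc (n + 1) i) P Q hrep
          (hPDE1 (n + 1) hn1 i) (hPDE2 (n + 1) hn1 i) htrv htrσ
        obtain ⟨hrv, hrσ⟩ := hrep x hx s hs
        refine ⟨?_, fun k => ?_⟩
        · rw [hrv, hzero.1]; simp
        · rw [hrσ k, hzero.2 k]; simp
  intro n hn i x hx s hs
  obtain ⟨h1, h2⟩ := key n hn i x hx s hs
  exact ⟨h1, funext fun k => by simpa using h2 k⟩
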